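/- For every function f : Bool → Bool → Bool there exists a real quadratic polynomial g in four variables x, y, z, a (total degree at most 2) such that g is nonnegative on every binary assignment in {0,1}⁴ ⊆ ℝ⁴, and for all booleans b₁, b₂, b₃ encoded as reals x, y, z ∈ {0,1} via false ↦ 0, true ↦ 1: f(b₁)(b₂) = b₃ holds if and only if there exists an auxiliary value a ∈ {0,1} with g(x,y,z,a) = 0. That is, one auxiliary (ancilla) binary variable suffices to encode any two-input logic gate by a binary quadratic function. -/

import Mathlib

/-- Encoding of Booleans as real numbers: `false ↦ 0`, `true ↦ 1`. -/
def boolToReal (b : Bool) : ℝ := if b then 1 else 0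

open MvPolynomial in
private lemma td_CX (r : ℝ) (i : Fin 4) :
    (C r * X i : MvPolynomial (Fin 4) ℝ).totalDegree ≤ 1 := by
  refine le_trans (totalDegree_mul _ _) ?_
  simp [totalDegree_X]

open MvPolynomial in
private lemma td_CXX (r : ℝ) (i j : Fin 4) :
    (C r * (X i * X j) : MvPolynomial (Fin 4) ℝ).totalDegree ≤ 2 := by
  refine le_trans (totalDegree_mul _ _) ?_
  refine le_trans (add_le_add (le_of_eq (totalDegree_C _)) (totalDegree_mul _ _)) ?_
  simp [totalDegree_X]

open MvPolynomial

/-- For every two-input logic gate `f : Bool → Bool → Bool` there is a real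
quadratic polynomial `g` in four variables `x, y, z, a` that is nonnegative on
every binary assignment in `{0,1}⁴`, such that `f b₁ b₂ = b₃` holds iff some
binary value of the ancilla `a` makes `g` vanish. -/
theorem two_input_gate_bq_with_ancilla (f : Bool → Bool → Bool) :
    ∃ g : MvPolynomial (Fin 4) ℝ, g.totalDegree ≤ 2 ∧
      (∀ v : Fin 4 → ℝ, (∀ i, v i = 0 ∨ v i = 1) → 0 ≤ MvPolynomial.eval v g) ∧
      (∀ b₁ b₂ b₃ : Bool,
        (f b₁ b₂ = b₃ ↔
          ∃ a : ℝ, (a = 0 ∨ a = 1) ∧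
            MvPolynomial.eval ![boolToReal b₁, boolToReal b₂, boolToReal b₃, a] g = 0)) := by
  set c : Bool → Bool → ℝ := fun i j => boolToReal (f i j) with hc
  set q : MvPolynomial (Fin 4) ℝ :=
    X 2 - (C (c false false) + C (c true false - c false false) * X 0
      + C (c false true - c false false) * X 1
      + C (c true true - c true false - c false true + c false false) * X 3) with hq
  set p : MvPolynomial (Fin 4) ℝ :=
    X 0 * X 1 - C 2 * (X 0 * X 3) - C 2 * (X 1 * X 3) + C 3 * X 3 with hp
  have E : ∀ x y z a : ℝ, MvPolynomial.eval ![x, y, z, a] (q ^ 2 + p) =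
      (z - (c false false + (c true false - c false false) * x
        + (c false true - c false false) * y
        + (c true true - c true false - c false true + c false false) * a)) ^ 2
      + (x * y - 2 * (x * a) - 2 * (y * a) + 3 * a) := by
    intro x y z a
    simp [hq, hp]
    try ring
  refine ⟨q ^ 2 + p, ?_, ?_, ?_⟩
  · -- total degree
    refine le_trans (totalDegree_add _ _) (max_le ?_ ?_)
    · refine le_trans (totalDegree_pow _ _) ?_
      have hq1 : q.totalDegree ≤ 1 := by
        rw [hq]
        refine le_trans (totalDegree_sub _ _) (max_le (by simp [totalDegree_X]) ?_)
        refine le_trans (totalDegree_add _ _) (max_le (le_trans (totalDegree_add _ _)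
          (max_le (le_trans (totalDegree_add _ _) (max_le (by simp) (td_CX _ _)))
            (td_CX _ _))) (td_CX _ _))
      omega
    · rw [hp]
      refine le_trans (totalDegree_add _ _) (max_le (le_trans (totalDegree_sub _ _)
        (max_le (le_trans (totalDegree_sub _ _) (max_le ?_ (td_CXX _ _ _))) (td_CXX _ _ _)))
        (le_trans (td_CX 3 3) (by omega)))
      refine le_trans (totalDegree_mul _ _) ?_
      simp [totalDegree_X]
  · -- nonnegativity
    intro v hv
    have hvm : ![v 0, v 1, v 2, v 3] = v := by
      funext i; fin_cases i <;> rfl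
    have hE := E (v 0) (v 1) (v 2) (v 3)
    rw [hvm] at hE
    rw [hE]
    have hsq := sq_nonneg (v 2 - (c false false + (c true false - c false false) * v 0
      + (c false true - c false false) * v 1
      + (c true true - c true false - c false true + c false false) * v 3))
    have hpen : 0 ≤ v 0 * v 1 - 2 * (v 0 * v 3) - 2 * (v 1 * v 3) + 3 * v 3 := by
      rcases hv 0 with h0 | h0 <;> rcases hv 1 with h1 | h1 <;> rcases hv 3 with h3 | h3 <;>
        rw [h0, h1, h3] <;> norm_num
    linarith
  · intro b₁ b₂ b₃
    set x := boolToReal b₁ with hxd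
    set y := boolToReal b₂ with hyd
    set z := boolToReal b₃ with hzd
    clear_value x y z
    have hx : x = 0 ∨ x = 1 := by cases b₁ <;> simp [hxd, boolToReal]
    have hy : y = 0 ∨ y = 1 := by cases b₂ <;> simp [hyd, boolToReal]
    have hF : c false false + (c true false - c false false) * x
        + (c false true - c false false) * y
        + (c true true - c true false - c false true + c false false) * (x * y)
        = c b₁ b₂ := by
      cases b₁ <;> cases b₂ <;> simp [hxd, hyd, boolToReal] <;> ring
    constructor
    · intro h
      refine ⟨x * y, ?_, ?_⟩
      · rcases hx with h' | h' <;> rcases hy with h'' | h'' <;> simp [h', h'']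
      · have hz : c b₁ b₂ = z := by simp [hc, hzd, h]
        rw [E, hF, hz]
        rcases hx with h' | h' <;> rcases hy with h'' | h'' <;> rw [h', h''] <;> ring_nf
    · rintro ⟨a, ha, h0⟩
      rw [E] at h0
      have hsq := sq_nonneg (z - (c false false + (c true false - c false false) * x
        + (c false true - c false false) * y
        + (c true true - c true false - c false true + c false false) * a))
      have hpen : x * y - 2 * (x * a) - 2 * (y * a) + 3 * a ≤ 0 := by linarith
      have haxy : a = x * y := by
        rcases hx with h' | h' <;> rcases hy with h'' | h'' <;> rcases ha with h''' | h''' <;>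
          rw [h', h''] at hpen ⊢ <;> subst h''' <;> linarith
      rw [haxy, hF] at h0
      have hz : z = c b₁ b₂ := by
        rcases hx with h' | h' <;> rcases hy with h'' | h'' <;> rw [h', h''] at h0 <;>
          · have h2 : (z - c b₁ b₂) ^ 2 = 0 := by linarith
            have h3 := sub_eq_zero.mp (pow_eq_zero_iff two_ne_zero |>.mp h2)
            exact h3
      simp only [hc, hzd] at hz
      cases b₃ <;> cases hfv : f b₁ b₂ <;> simp_all [boolToReal]
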